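/- Let ρ be as in the Werner state parameterization and define g_1(A,B) = tr_{12}[ρ^{T_1}(A ⊗ B ⊗ 1)]. Then g_1(A,B) = α_1 tr(A)tr(B)·1 + α_2 tr(A^T B)·1 + α_3 tr(A)B + α_4 tr(B)A^T + α_5 B A^T + α_6 A^T B. -/

import Mathlib

open Matrix

/-- Identity-style permutation operators on `(ℂ^d)^{⊗3}` (product-type indices). -/
noncomputable def permOp12 (d : ℕ) :
    Matrix (Fin d × Fin d × Fin d) (Fin d × Fin d × Fin d) ℂ :=
  Matrix.of fun i j => if i.1 = j.2.1 ∧ i.2.1 = j.1 ∧ i.2.2 = j.2.2 then 1 else 0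

noncomputable def permOp23 (d : ℕ) :
    Matrix (Fin d × Fin d × Fin d) (Fin d × Fin d × Fin d) ℂ :=
  Matrix.of fun i j => if i.1 = j.1 ∧ i.2.1 = j.2.2 ∧ i.2.2 = j.2.1 then 1 else 0

noncomputable def permOp13 (d : ℕ) :
    Matrix (Fin d × Fin d × Fin d) (Fin d × Fin d × Fin d) ℂ :=
  Matrix.of fun i j => if i.1 = j.2.2 ∧ i.2.1 = j.2.1 ∧ i.2.2 = j.1 then 1 else 0

/-- The cycle (123), sending `|v₁v₂v₃⟩` to `|v₃v₁v₂⟩`. -/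
noncomputable def permOp123 (d : ℕ) :
    Matrix (Fin d × Fin d × Fin d) (Fin d × Fin d × Fin d) ℂ :=
  Matrix.of fun i j => if i.1 = j.2.2 ∧ i.2.1 = j.1 ∧ i.2.2 = j.2.1 then 1 else 0

/-- The cycle (321), sending `|v₁v₂v₃⟩` to `|v₂v₃v₁⟩`. -/
noncomputable def permOp321 (d : ℕ) :
    Matrix (Fin d × Fin d × Fin d) (Fin d × Fin d × Fin d) ℂ :=
  Matrix.of fun i j => if i.1 = j.2.1 ∧ i.2.1 = j.2.2 ∧ i.2.2 = j.1 then 1 else 0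

/-- Tensor product of three `d × d` matrices. -/
noncomputable def kron3 {d : ℕ} (A B C : Matrix (Fin d) (Fin d) ℂ) :
    Matrix (Fin d × Fin d × Fin d) (Fin d × Fin d × Fin d) ℂ :=
  Matrix.of fun i j => A i.1 j.1 * B i.2.1 j.2.1 * C i.2.2 j.2.2

/-- Partial trace over the first two of three tensor factors. -/
noncomputable def ptr12 {d : ℕ}
    (M : Matrix (Fin d × Fin d × Fin d) (Fin d × Fin d × Fin d) ℂ) :
    Matrix (Fin d) (Fin d) ℂ :=
  Matrix.of fun a b => ∑ x : Fin d, ∑ y : Fin d, M (x, y, a) (x, y, b)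

/-- Partial transpose on the first of three tensor factors. -/
noncomputable def pt1of3 {d : ℕ}
    (M : Matrix (Fin d × Fin d × Fin d) (Fin d × Fin d × Fin d) ℂ) :
    Matrix (Fin d × Fin d × Fin d) (Fin d × Fin d × Fin d) ℂ :=
  Matrix.of fun i j => M (j.1, i.2.1, i.2.2) (i.1, j.2.1, j.2.2)

/-- `g₁(A,B) = tr₁₂[ρ^{T₁}(A ⊗ B ⊗ 1)]` evaluated for a linear combination of
permutation operators `ρ`. -/
theorem eggeling_werner_g1 (d : ℕ) (α₁ α₂ α₃ α₄ α₅ α₆ : ℂ)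
    (A B : Matrix (Fin d) (Fin d) ℂ) :
    ptr12 (pt1of3 (α₁ • (1 : Matrix (Fin d × Fin d × Fin d) (Fin d × Fin d × Fin d) ℂ) +
        α₂ • permOp12 d + α₃ • permOp23 d + α₄ • permOp13 d +
        α₅ • permOp123 d + α₆ • permOp321 d) * kron3 A B 1) =
      (α₁ * A.trace * B.trace) • (1 : Matrix (Fin d) (Fin d) ℂ) +
        (α₂ * (Aᵀ * B).trace) • (1 : Matrix (Fin d) (Fin d) ℂ) +
        (α₃ * A.trace) • B + (α₄ * B.trace) • Aᵀ +
        α₅ • (B * Aᵀ) + α₆ • (Aᵀ * B) := by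
  ext a b
  simp only [ptr12, pt1of3, permOp12, permOp23, permOp13, permOp123, permOp321, kron3,
    Matrix.mul_apply, Matrix.add_apply, Matrix.smul_apply, Matrix.one_apply, Matrix.of_apply,
    Fintype.sum_prod_type, Matrix.trace, Matrix.diag, Matrix.transpose_apply, smul_eq_mul,
    Prod.mk.injEq, ite_and, mul_ite, ite_mul, mul_zero, zero_mul, mul_one, one_mul,
    Finset.sum_ite_eq, Finset.sum_ite_eq', Finset.mem_univ, if_true,
    Finset.sum_add_distrib, Finset.mul_sum, Finset.sum_mul]
  simp only [add_mul, ite_mul, zero_mul, Finset.sum_ite_eq, Finset.sum_ite_eq',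
    Finset.mem_univ, if_true, Finset.sum_ite_irrel, Finset.sum_const_zero,
    Finset.sum_add_distrib]
  rw [Finset.sum_comm (f := fun x x_1 => α₁ * (A x x * B x_1 x_1))]
  have h4 : ∑ x : Fin d, α₄ * (A b a * B x x) = ∑ i : Fin d, α₄ * B i i * A b a :=
    Finset.sum_congr rfl fun x _ => by ring
  have h5 : ∑ x : Fin d, α₅ * (A b x * B a x) = ∑ x : Fin d, α₅ * (B a x * A b x) :=
    Finset.sum_congr rfl fun x _ => by ring
  rw [h4, h5]
  ring_nf
  have e3 : ∑ x : Fin d, α₃ * A x x * B a b = ∑ x : Fin d, α₃ * B a b * A x x :=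
    Finset.sum_congr rfl fun x _ => by ring
  have e4 : ∑ x : Fin d, α₄ * B x x * A b a = ∑ x : Fin d, α₄ * A b a * B x x :=
    Finset.sum_congr rfl fun x _ => by ring
  rw [e3, e4]
  ring
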